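/- Let χ be an ideal character of G (afforded by a two-sided ideal I of CG). A permutation π of G is a generic symmetry of χ if and only if χ(π(g)^{-1}π(h)) = χ(g^{-1}h) for all g, h ∈ G; moreover, for every generic symmetry π, χ̂(π) = (1/|G|) Σ_{g ∈ G} χ(g^{-1}π(g)). -/

import Mathlib

open Finset LinearMap

set_option linter.unusedSectionVars false

noncomputable section GenSymAux

namespace GenSymAux

local notation "⟪" x ", " y "⟫" => @inner ℂ _ _ x y

variable {G : Type*} [Group G] [Fintype G]
variable {V : Type*} [AddCommGroup V] [Module ℂ V] [FiniteDimensional ℂ V]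

abbrev E (G : Type*) [Fintype G] : Type _ := EuclideanSpace ℂ G

def S (ρ : Representation ℂ G V) : E G →ₗ[ℂ] (V →ₗ[ℂ] V) where
  toFun c := ∑ g : G, c g • (ρ g : V →ₗ[ℂ] V)
  map_add' c d := by
    simp [PiLp.add_apply, add_smul, Finset.sum_add_distrib]
  map_smul' r c := by
    simp [PiLp.smul_apply, smul_smul, Finset.smul_sum]

def T (ρ : Representation ℂ G V) (w : V) : E G →ₗ[ℂ] V where
  toFun c := S ρ c w
  map_add' c d := by simp
  map_smul' r c := by simp

lemma T_apply (ρ : Representation ℂ G V) (w : V) (c : E G) :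
    T ρ w c = ∑ g : G, c g • ρ g w := by
  simp [T, S, LinearMap.sum_apply]

lemma T_single [DecidableEq G] (ρ : Representation ℂ G V) (w : V) (g : G) :
    T ρ w (EuclideanSpace.single g 1) = ρ g w := by
  rw [T_apply, Finset.sum_eq_single g]
  · simp [EuclideanSpace.single_apply]
  · intro b _ hb
    simp [EuclideanSpace.single_apply, hb]
  · simp

lemma ext_single [DecidableEq G] {M : Type*} [AddCommGroup M] [Module ℂ M]
    {f f' : E G →ₗ[ℂ] M}
    (h : ∀ g : G, f (EuclideanSpace.single g 1) = f' (EuclideanSpace.single g 1)) :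
    f = f' := by
  apply Module.Basis.ext (EuclideanSpace.basisFun G ℂ).toBasis
  intro g
  simpa [OrthonormalBasis.coe_toBasis, EuclideanSpace.basisFun_apply] using h g

lemma range_T [DecidableEq G] (ρ : Representation ℂ G V) (w : V)
    (hw : Submodule.span ℂ (Set.range fun g : G => ρ g w) = ⊤) :
    LinearMap.range (T ρ w) = ⊤ := by
  rw [← top_le_iff, ← hw, Submodule.span_le]
  rintro x ⟨g, rfl⟩
  exact ⟨EuclideanSpace.single g 1, T_single ρ w g⟩

/-- Permutation operator on `E G`. -/
def Pop (σ : Equiv.Perm G) : E G ≃ₗ[ℂ] E G where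
  toFun c := WithLp.toLp 2 fun g => c (σ.symm g)
  invFun c := WithLp.toLp 2 fun g => c (σ g)
  map_add' c d := rfl
  map_smul' r c := rfl
  left_inv c := by ext g; exact congrArg c (σ.symm_apply_apply g)
  right_inv c := by ext g; exact congrArg c (σ.apply_symm_apply g)

lemma Pop_apply (σ : Equiv.Perm G) (c : E G) (g : G) : Pop σ c g = c (σ.symm g) := rfl

lemma Pop_symm_apply (σ : Equiv.Perm G) (c : E G) (g : G) : (Pop σ).symm c g = c (σ g) := rfl

lemma Pop_single [DecidableEq G] (σ : Equiv.Perm G) (b : G) :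
    Pop σ (EuclideanSpace.single b 1) = EuclideanSpace.single (σ b) 1 := by
  ext g
  simp [Pop_apply, EuclideanSpace.single_apply, Equiv.symm_apply_eq]

lemma Pop_inner (σ : Equiv.Perm G) (c d : E G) : ⟪Pop σ c, Pop σ d⟫ = ⟪c, d⟫ := by
  simp only [PiLp.inner_apply, Pop_apply]
  exact Equiv.sum_comp σ.symm fun u => inner ℂ (c u) (d u)

lemma S_Pop (ρ : Representation ℂ G V) (σ : Equiv.Perm G) (c : E G) :
    S ρ (Pop σ c) = ∑ u : G, c u • (ρ (σ u) : V →ₗ[ℂ] V) := by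
  show (∑ g : G, (Pop σ c) g • (ρ g : V →ₗ[ℂ] V)) = _
  rw [← Equiv.sum_comp σ fun g => (Pop σ c) g • (ρ g : V →ₗ[ℂ] V)]
  exact Finset.sum_congr rfl fun u _ => by rw [Pop_apply, Equiv.symm_apply_apply]

lemma S_rt (ρ : Representation ℂ G V) (s : G) (c : E G) :
    S ρ (Pop (Equiv.mulRight s) c) = S ρ c * (ρ s : V →ₗ[ℂ] V) := by
  rw [S_Pop]
  show _ = (∑ g : G, c g • (ρ g : V →ₗ[ℂ] V)) * (ρ s : V →ₗ[ℂ] V)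
  rw [Finset.sum_mul]
  refine Finset.sum_congr rfl fun u _ => ?_
  rw [Equiv.coe_mulRight, map_mul, smul_mul_assoc]

def NN (ρ : Representation ℂ G V) : Submodule ℂ (E G) := LinearMap.ker (S ρ)

lemma asAlgebraHom_sum [DecidableEq G] (ρ : Representation ℂ G V) (c : E G) :
    ρ.asAlgebraHom (∑ g : G, MonoidAlgebra.single g (c g)) = S ρ c := by
  rw [map_sum]
  exact Finset.sum_congr rfl fun g _ => ρ.asAlgebraHom_single g (c g)

lemma sum_single_mul [DecidableEq G] (c : E G) (s : G) :
    (∑ g : G, (MonoidAlgebra.single g (c g) : MonoidAlgebra ℂ G)) * (MonoidAlgebra.single s (1:ℂ) : MonoidAlgebra ℂ G)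
    = ∑ g : G, (MonoidAlgebra.single g ((Pop (Equiv.mulRight s) c) g) : MonoidAlgebra ℂ G) := by
  rw [Finset.sum_mul]
  rw [← Equiv.sum_comp (Equiv.mulRight s)
    fun g => (MonoidAlgebra.single g ((Pop (Equiv.mulRight s) c) g) : MonoidAlgebra ℂ G)]
  refine Finset.sum_congr rfl fun u _ => ?_
  rw [MonoidAlgebra.single_mul_single, mul_one]
  congr 1
  rw [Pop_apply]
  congr 1
  simp

lemma S_eq_zero [DecidableEq G] (ρ : Representation ℂ G V) (v : V)
    (hv : Submodule.span ℂ (Set.range fun g : G => ρ g v) = ⊤)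
    (hideal : ∀ a b : MonoidAlgebra ℂ G, ρ.asAlgebraHom a v = 0 →
      ρ.asAlgebraHom (a * b) v = 0)
    (c : E G) (h0 : S ρ c v = 0) : S ρ c = 0 := by
  have key : ∀ s : G, S ρ c (ρ s v) = 0 := by
    intro s
    have h1 := hideal (∑ g : G, MonoidAlgebra.single g (c g)) (MonoidAlgebra.single s (1:ℂ))
      (by rwa [asAlgebraHom_sum])
    rw [sum_single_mul, asAlgebraHom_sum, S_rt] at h1
    simpa [Module.End.mul_apply] using h1
  have hle : Submodule.span ℂ (Set.range fun g : G => ρ g v) ≤ LinearMap.ker (S ρ c) :=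
    Submodule.span_le.mpr (by rintro x ⟨g, rfl⟩; exact key g)
  rw [hv, top_le_iff] at hle
  exact LinearMap.ker_eq_top.mp hle

lemma ker_T_v [DecidableEq G] (ρ : Representation ℂ G V) (v : V)
    (hv : Submodule.span ℂ (Set.range fun g : G => ρ g v) = ⊤)
    (hideal : ∀ a b : MonoidAlgebra ℂ G, ρ.asAlgebraHom a v = 0 →
      ρ.asAlgebraHom (a * b) v = 0) :
    LinearMap.ker (T ρ v) = NN ρ := by
  ext c
  constructor
  · intro hc
    exact S_eq_zero ρ v hv hideal c hc
  · intro hc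
    have : S ρ c = 0 := hc
    show S ρ c v = 0
    rw [this]; rfl

lemma NN_le_ker (ρ : Representation ℂ G V) (w : V) : NN ρ ≤ LinearMap.ker (T ρ w) := by
  intro c hc
  have : S ρ c = 0 := hc
  show S ρ c w = 0
  rw [this]; rfl

lemma ker_T_w [DecidableEq G] (ρ : Representation ℂ G V) (v : V)
    (hv : Submodule.span ℂ (Set.range fun g : G => ρ g v) = ⊤)
    (hideal : ∀ a b : MonoidAlgebra ℂ G, ρ.asAlgebraHom a v = 0 →
      ρ.asAlgebraHom (a * b) v = 0)
    (w : V) (hw : Submodule.span ℂ (Set.range fun g : G => ρ g w) = ⊤) :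
    LinearMap.ker (T ρ w) = NN ρ := by
  have h1 : Module.finrank ℂ (LinearMap.range (T ρ w)) + Module.finrank ℂ (LinearMap.ker (T ρ w))
      = Module.finrank ℂ (E G) := LinearMap.finrank_range_add_finrank_ker _
  have h2 : Module.finrank ℂ (LinearMap.range (T ρ v)) + Module.finrank ℂ (LinearMap.ker (T ρ v))
      = Module.finrank ℂ (E G) := LinearMap.finrank_range_add_finrank_ker _
  rw [range_T ρ w hw] at h1
  rw [range_T ρ v hv] at h2
  rw [ker_T_v ρ v hv hideal] at h2
  have hfr : Module.finrank ℂ (NN ρ) = Module.finrank ℂ (LinearMap.ker (T ρ w)) := by omega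
  exact (Submodule.eq_of_le_of_finrank_eq (NN_le_ker ρ w) hfr).symm

/-- Orthogonal projection onto the orthocomplement of the relation space. -/
def Pr (ρ : Representation ℂ G V) : E G →ₗ[ℂ] E G :=
  ((NN ρ)ᗮ.subtype).comp (Submodule.orthogonalProjectionOnto (NN ρ)ᗮ).toLinearMap

lemma Pr_mem_W (ρ : Representation ℂ G V) (x : E G) : Pr ρ x ∈ (NN ρ)ᗮ :=
  SetLike.coe_mem _

lemma sub_Pr_mem (ρ : Representation ℂ G V) (x : E G) : x - Pr ρ x ∈ NN ρ := by
  have h := Submodule.sub_starProjection_mem_orthogonal (K := (NN ρ)ᗮ) x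
  rwa [Submodule.orthogonal_orthogonal] at h

lemma Pr_eq_self (ρ : Representation ℂ G V) {x : E G} (hx : x ∈ (NN ρ)ᗮ) : Pr ρ x = x :=
  Submodule.starProjection_eq_self_iff.mpr hx

lemma Pr_unique (ρ : Representation ℂ G V) {x y : E G} (hy : y ∈ (NN ρ)ᗮ)
    (hxy : x - y ∈ NN ρ) : Pr ρ x = y := by
  have h1 : Pr ρ x - y ∈ (NN ρ)ᗮ := sub_mem (Pr_mem_W ρ x) hy
  have h2 : Pr ρ x - y ∈ NN ρ := by
    have h3 := sub_Pr_mem ρ x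
    have : Pr ρ x - y = (x - y) - (x - Pr ρ x) := by abel
    rw [this]
    exact sub_mem hxy h3
  have h4 : Pr ρ x - y = 0 := by
    have hd : Disjoint ((NN ρ)ᗮ) (NN ρ) := by
      have := Submodule.orthogonal_disjoint (K := (NN ρ)ᗮ)
      rwa [Submodule.orthogonal_orthogonal] at this
    exact (Submodule.disjoint_def.mp hd) _ h1 h2
  exact sub_eq_zero.mp h4
  
lemma Pr_zero (ρ : Representation ℂ G V) {x : E G} (hx : x ∈ NN ρ) : Pr ρ x = 0 :=
  Pr_unique ρ (zero_mem _) (by simpa using hx)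

lemma mem_NN_iff_Pr (ρ : Representation ℂ G V) {x : E G} : x ∈ NN ρ ↔ Pr ρ x = 0 := by
  constructor
  · exact Pr_zero ρ
  · intro h
    have := sub_Pr_mem ρ x
    rwa [h, sub_zero] at this

/-- Commutation of the projection with inner-product preserving equivalences
stabilizing `NN`. -/
lemma Pr_comm (ρ : Representation ℂ G V) (f : E G ≃ₗ[ℂ] E G)
    (hi : ∀ c d : E G, ⟪f c, f d⟫ = ⟪c, d⟫)
    (h1 : ∀ x ∈ NN ρ, f x ∈ NN ρ) (h2 : ∀ x ∈ NN ρ, f.symm x ∈ NN ρ) (x : E G) :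
    Pr ρ (f x) = f (Pr ρ x) := by
  refine Pr_unique ρ ?_ ?_
  · rw [Submodule.mem_orthogonal]
    intro u hu
    have : (⟪f (f.symm u), f (Pr ρ x)⟫ : ℂ) = ⟪f.symm u, Pr ρ x⟫ := hi _ _
    rw [f.apply_symm_apply] at this
    rw [this]
    exact (Submodule.mem_orthogonal _ _).mp (Pr_mem_W ρ x) _ (h2 u hu)
  · have : f x - f (Pr ρ x) = f (x - Pr ρ x) := by rw [map_sub]
    rw [this]
    exact h1 _ (sub_Pr_mem ρ x)

/-- A canonical linear section of `T ρ w` whose co-projection is `Pr`. -/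
lemma exists_J [DecidableEq G] (ρ : Representation ℂ G V) (v : V)
    (hv : Submodule.span ℂ (Set.range fun g : G => ρ g v) = ⊤)
    (hideal : ∀ a b : MonoidAlgebra ℂ G, ρ.asAlgebraHom a v = 0 →
      ρ.asAlgebraHom (a * b) v = 0)
    (w : V) (hw : Submodule.span ℂ (Set.range fun g : G => ρ g w) = ⊤) :
    ∃ J : V →ₗ[ℂ] E G, (∀ y, T ρ w (J y) = y) ∧ (∀ c, J (T ρ w c) = Pr ρ c) := by
  have hker : LinearMap.ker (T ρ w) = NN ρ := ker_T_w ρ v hv hideal w hw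
  set W := (NN ρ)ᗮ with hW
  set φ : W →ₗ[ℂ] V := (T ρ w).comp W.subtype with hφ
  have hTPr : ∀ c : E G, T ρ w (Pr ρ c) = T ρ w c := by
    intro c
    have h0 : T ρ w (c - Pr ρ c) = 0 := by
      have hm := sub_Pr_mem ρ c
      rw [← hker] at hm
      exact hm
    rw [map_sub] at h0
    exact (sub_eq_zero.mp h0).symm
  have hinj : LinearMap.ker φ = ⊥ := by
    rw [LinearMap.ker_eq_bot']
    intro x hx
    have hx1 : (x : E G) ∈ NN ρ := by rw [← hker]; exact hx
    have hd : Disjoint (NN ρ) ((NN ρ)ᗮ) := Submodule.orthogonal_disjoint (K := NN ρ)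
    have : (x : E G) = 0 := (Submodule.disjoint_def.mp hd) _ hx1 x.2
    exact Subtype.ext this
  have hsurj : Function.Surjective φ := by
    intro y
    obtain ⟨c, rfl⟩ := LinearMap.range_eq_top.mp (range_T ρ w hw) y
    exact ⟨⟨Pr ρ c, Pr_mem_W ρ c⟩, hTPr c⟩
  set ew : W ≃ₗ[ℂ] V := LinearEquiv.ofBijective φ ⟨LinearMap.ker_eq_bot.mp hinj, hsurj⟩ with hew
  refine ⟨W.subtype ∘ₗ ew.symm.toLinearMap, fun y => ?_, fun c => ?_⟩
  · show T ρ w ((ew.symm y : W) : E G) = y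
    have : φ (ew.symm y) = y := by
      have := ew.apply_symm_apply y
      exact this
    exact this
  · show ((ew.symm (T ρ w c) : W) : E G) = Pr ρ c
    have h5 : T ρ w c = ew ⟨Pr ρ c, Pr_mem_W ρ c⟩ := by
      show T ρ w c = φ ⟨Pr ρ c, Pr_mem_W ρ c⟩
      exact (hTPr c).symm
    rw [h5, LinearEquiv.symm_apply_apply]

lemma trace_E_eq [DecidableEq G] (f : E G →ₗ[ℂ] E G) :
    LinearMap.trace ℂ (E G) f = ∑ b : G, f (EuclideanSpace.single b 1) b := by
  classical
  rw [LinearMap.trace_eq_matrix_trace ℂ ((EuclideanSpace.basisFun G ℂ).toBasis) f]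
  rw [Matrix.trace]
  refine Finset.sum_congr rfl fun b _ => ?_
  rw [Matrix.diag_apply, LinearMap.toMatrix_apply]
  rw [(EuclideanSpace.basisFun G ℂ).coe_toBasis_repr_apply]
  rw [EuclideanSpace.basisFun_repr]
  rw [OrthonormalBasis.coe_toBasis, EuclideanSpace.basisFun_apply]

/-- Conjugation formula for traces. -/
lemma trace_conj [DecidableEq G] (ρ : Representation ℂ G V) (v : V)
    (hv : Submodule.span ℂ (Set.range fun g : G => ρ g v) = ⊤)
    (hideal : ∀ a b : MonoidAlgebra ℂ G, ρ.asAlgebraHom a v = 0 →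
      ρ.asAlgebraHom (a * b) v = 0)
    (w : V) (hw : Submodule.span ℂ (Set.range fun g : G => ρ g w) = ⊤)
    (B : V →ₗ[ℂ] V) (L : E G →ₗ[ℂ] E G)
    (hrel : B ∘ₗ T ρ w = T ρ w ∘ₗ L) :
    LinearMap.trace ℂ V B = LinearMap.trace ℂ (E G) (L ∘ₗ Pr ρ) := by
  obtain ⟨J, hTJ, hJT⟩ := exists_J ρ v hv hideal w hw
  have hTJ' : T ρ w ∘ₗ J = LinearMap.id := LinearMap.ext hTJ
  have hJT' : J ∘ₗ T ρ w = Pr ρ := LinearMap.ext hJT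
  calc LinearMap.trace ℂ V B
      = LinearMap.trace ℂ V (B ∘ₗ (T ρ w ∘ₗ J)) := by rw [hTJ', LinearMap.comp_id]
    _ = LinearMap.trace ℂ V (T ρ w ∘ₗ (L ∘ₗ J)) := by
        rw [← LinearMap.comp_assoc, hrel, LinearMap.comp_assoc]
    _ = LinearMap.trace ℂ (E G) ((L ∘ₗ J) ∘ₗ T ρ w) := LinearMap.trace_comp_comm' _ _
    _ = LinearMap.trace ℂ (E G) (L ∘ₗ Pr ρ) := by rw [LinearMap.comp_assoc, hJT']

/-- Matrix entries of the projection. -/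
def pp [DecidableEq G] (ρ : Representation ℂ G V) (a b : G) : ℂ :=
  Pr ρ (EuclideanSpace.single b 1) a

lemma NN_rt (ρ : Representation ℂ G V) (s : G) :
    ∀ x ∈ NN ρ, Pop (Equiv.mulRight s) x ∈ NN ρ := by
  intro x hx
  have hx' : S ρ x = 0 := hx
  show S ρ (Pop (Equiv.mulRight s) x) = 0
  rw [S_rt, hx', zero_mul]

lemma Pop_mulRight_symm (s : G) (x : E G) :
    (Pop (Equiv.mulRight s)).symm x = Pop (Equiv.mulRight s⁻¹) x := by
  ext g
  rw [Pop_symm_apply, Pop_apply]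
  congr 1
  simp

lemma Pr_rt (ρ : Representation ℂ G V) (s : G) (x : E G) :
    Pr ρ (Pop (Equiv.mulRight s) x) = Pop (Equiv.mulRight s) (Pr ρ x) := by
  refine Pr_comm ρ (Pop (Equiv.mulRight s)) (Pop_inner _) (NN_rt ρ s) ?_ x
  intro y hy
  rw [Pop_mulRight_symm]
  exact NN_rt ρ s⁻¹ y hy

lemma pp_rt [DecidableEq G] (ρ : Representation ℂ G V) (a b s : G) :
    pp ρ (a * s) (b * s) = pp ρ a b := by
  unfold pp
  have h1 : (EuclideanSpace.single (b * s) (1:ℂ) : E G)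
      = Pop (Equiv.mulRight s) (EuclideanSpace.single b 1) := by
    rw [Pop_single]; rfl
  rw [h1, Pr_rt, Pop_apply]
  show Pr ρ (EuclideanSpace.single b 1) (a * s * s⁻¹) = Pr ρ (EuclideanSpace.single b 1) a
  rw [mul_inv_cancel_right]

lemma trace_rho_eq [DecidableEq G] (ρ : Representation ℂ G V) (v : V)
    (hv : Submodule.span ℂ (Set.range fun g : G => ρ g v) = ⊤)
    (hideal : ∀ a b : MonoidAlgebra ℂ G, ρ.asAlgebraHom a v = 0 →
      ρ.asAlgebraHom (a * b) v = 0)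
    (h : G) :
    LinearMap.trace ℂ V (ρ h) = ∑ b : G, pp ρ (h⁻¹ * b) b := by
  have hrel : (ρ h : V →ₗ[ℂ] V) ∘ₗ T ρ v = T ρ v ∘ₗ (Pop (Equiv.mulLeft h)).toLinearMap := by
    apply ext_single
    intro g
    rw [LinearMap.comp_apply, LinearMap.comp_apply, T_single]
    rw [LinearEquiv.coe_toLinearMap, Pop_single, T_single]
    show ρ h (ρ g v) = ρ (h * g) v
    rw [map_mul]
    rfl
  rw [trace_conj ρ v hv hideal v hv (ρ h) _ hrel, trace_E_eq]
  refine Finset.sum_congr rfl fun b _ => ?_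
  rw [LinearMap.comp_apply, LinearEquiv.coe_toLinearMap, Pop_apply]
  show Pr ρ (EuclideanSpace.single b 1) ((Equiv.mulLeft h).symm b) = _
  rw [Equiv.mulLeft_symm]
  rfl

lemma trace_card_pp [DecidableEq G] (ρ : Representation ℂ G V) (v : V)
    (hv : Submodule.span ℂ (Set.range fun g : G => ρ g v) = ⊤)
    (hideal : ∀ a b : MonoidAlgebra ℂ G, ρ.asAlgebraHom a v = 0 →
      ρ.asAlgebraHom (a * b) v = 0)
    (h : G) :
    LinearMap.trace ℂ V (ρ h) = (Fintype.card G : ℂ) * pp ρ h⁻¹ 1 := by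
  rw [trace_rho_eq ρ v hv hideal h]
  have : ∀ b : G, pp ρ (h⁻¹ * b) b = pp ρ h⁻¹ 1 := by
    intro b
    have := pp_rt ρ h⁻¹ 1 b
    rwa [one_mul] at this
  rw [Finset.sum_congr rfl fun b _ => this b]
  rw [Finset.sum_const, Finset.card_univ, nsmul_eq_mul]

lemma pp_eq [DecidableEq G] (ρ : Representation ℂ G V) (v : V)
    (hv : Submodule.span ℂ (Set.range fun g : G => ρ g v) = ⊤)
    (hideal : ∀ a b : MonoidAlgebra ℂ G, ρ.asAlgebraHom a v = 0 →
      ρ.asAlgebraHom (a * b) v = 0)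
    (a b : G) :
    (Fintype.card G : ℂ) * pp ρ a b = LinearMap.trace ℂ V (ρ (b * a⁻¹)) := by
  have h1 : pp ρ a b = pp ρ (a * b⁻¹) 1 := by
    have := pp_rt ρ (a * b⁻¹) 1 b
    rw [one_mul, inv_mul_cancel_right] at this
    exact this
  rw [h1, trace_card_pp ρ v hv hideal (b * a⁻¹)]
  congr 2
  simp [mul_inv_rev]

def coord (a : G) : E G →ₗ[ℂ] ℂ where
  toFun c := c a
  map_add' _ _ := rfl
  map_smul' _ _ := rfl

lemma Pr_coord [DecidableEq G] (ρ : Representation ℂ G V) (c : E G) (a : G) :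
    Pr ρ c a = ∑ b : G, c b * pp ρ a b := by
  have hf : (coord a) ∘ₗ Pr ρ =
      ({ toFun := fun c : E G => ∑ b : G, c b * pp ρ a b,
         map_add' := fun x y => by
           simp [PiLp.add_apply, add_mul, Finset.sum_add_distrib]
         map_smul' := fun r x => by
           simp [PiLp.smul_apply, mul_assoc, Finset.mul_sum] } : E G →ₗ[ℂ] ℂ) := by
    apply ext_single
    intro g
    show pp ρ a g = ∑ b : G, (EuclideanSpace.single g (1:ℂ) : E G) b * pp ρ a b
    rw [Finset.sum_eq_single g]
    · simp [EuclideanSpace.single_apply]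
    · intro b _ hb
      simp [EuclideanSpace.single_apply, hb]
    · simp
  exact congrFun (congrArg (fun (f : E G →ₗ[ℂ] ℂ) => f.toFun) hf) c

lemma trace_cyc (ρ : Representation ℂ G V) (u t : G) :
    LinearMap.trace ℂ V (ρ (u * t)) = LinearMap.trace ℂ V (ρ (t * u)) := by
  rw [map_mul ρ u t, map_mul ρ t u]
  exact LinearMap.trace_mul_comm ℂ (ρ u) (ρ t)

lemma AT_rel [DecidableEq G] (ρ : Representation ℂ G V) (w : V) (π : Equiv.Perm G)
    (A : V ≃ₗ[ℂ] V) (hA : ∀ g : G, A (ρ g w) = ρ (π g) w) :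
    A.toLinearMap ∘ₗ T ρ w = T ρ w ∘ₗ (Pop π).toLinearMap := by
  apply ext_single
  intro g
  show A (T ρ w (EuclideanSpace.single g 1)) = T ρ w (Pop π (EuclideanSpace.single g 1))
  rw [T_single, Pop_single, T_single]
  exact hA g

lemma Pop_inv_symm (π : Equiv.Perm G) (x : E G) : (Pop π).symm x = Pop π⁻¹ x := by
  ext g
  rw [Pop_symm_apply, Pop_apply]
  simp [Equiv.Perm.inv_def]

lemma NN_stab_of_A [DecidableEq G] (ρ : Representation ℂ G V) (v : V)
    (hv : Submodule.span ℂ (Set.range fun g : G => ρ g v) = ⊤)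
    (hideal : ∀ a b : MonoidAlgebra ℂ G, ρ.asAlgebraHom a v = 0 →
      ρ.asAlgebraHom (a * b) v = 0)
    (π : Equiv.Perm G) (A : V ≃ₗ[ℂ] V) (hA : ∀ g : G, A (ρ g v) = ρ (π g) v) :
    (∀ x ∈ NN ρ, Pop π x ∈ NN ρ) ∧ (∀ x ∈ NN ρ, (Pop π).symm x ∈ NN ρ) := by
  have hker := ker_T_v ρ v hv hideal
  have hrel := AT_rel ρ v π A hA
  have hrel' : ∀ c : E G, A (T ρ v c) = T ρ v (Pop π c) := by
    intro c
    have := congrFun (congrArg DFunLike.coe hrel) c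
    simpa using this
  constructor
  · intro x hx
    rw [← hker] at hx ⊢
    have hx0 : T ρ v x = 0 := hx
    show T ρ v (Pop π x) = 0
    rw [← hrel', hx0, map_zero]
  · intro x hx
    rw [← hker] at hx ⊢
    have hx0 : T ρ v x = 0 := hx
    show T ρ v ((Pop π).symm x) = 0
    have h2 : A (T ρ v ((Pop π).symm x)) = 0 := by
      rw [hrel', LinearEquiv.apply_symm_apply, hx0]
    exact (LinearEquiv.map_eq_zero_iff A).mp h2

lemma pp_pi_of_stab [DecidableEq G] (ρ : Representation ℂ G V) (π : Equiv.Perm G)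
    (h1 : ∀ x ∈ NN ρ, Pop π x ∈ NN ρ) (h2 : ∀ x ∈ NN ρ, (Pop π).symm x ∈ NN ρ)
    (a b : G) : pp ρ (π a) (π b) = pp ρ a b := by
  have hcomm := Pr_comm ρ (Pop π) (Pop_inner π) h1 h2
  unfold pp
  have hs : (EuclideanSpace.single (π b) (1:ℂ) : E G)
      = Pop π (EuclideanSpace.single b 1) := (Pop_single π b).symm
  rw [hs, hcomm, Pop_apply, Equiv.symm_apply_apply]

lemma chi_of_pp [DecidableEq G] (ρ : Representation ℂ G V) (v : V)
    (hv : Submodule.span ℂ (Set.range fun g : G => ρ g v) = ⊤)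
    (hideal : ∀ a b : MonoidAlgebra ℂ G, ρ.asAlgebraHom a v = 0 →
      ρ.asAlgebraHom (a * b) v = 0)
    (π : Equiv.Perm G) (hpp : ∀ a b : G, pp ρ (π a) (π b) = pp ρ a b)
    (g h : G) :
    LinearMap.trace ℂ V (ρ ((π g)⁻¹ * π h)) = LinearMap.trace ℂ V (ρ (g⁻¹ * h)) := by
  rw [trace_cyc, ← pp_eq ρ v hv hideal (π g) (π h), hpp, pp_eq ρ v hv hideal g h,
    trace_cyc]

lemma card_ne_zero' : (Fintype.card G : ℂ) ≠ 0 :=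
  Nat.cast_ne_zero.mpr Fintype.card_ne_zero

lemma pp_of_chi [DecidableEq G] (ρ : Representation ℂ G V) (v : V)
    (hv : Submodule.span ℂ (Set.range fun g : G => ρ g v) = ⊤)
    (hideal : ∀ a b : MonoidAlgebra ℂ G, ρ.asAlgebraHom a v = 0 →
      ρ.asAlgebraHom (a * b) v = 0)
    (π : Equiv.Perm G)
    (hχ : ∀ g h : G, LinearMap.trace ℂ V (ρ ((π g)⁻¹ * π h)) =
      LinearMap.trace ℂ V (ρ (g⁻¹ * h)))
    (a b : G) : pp ρ (π a) (π b) = pp ρ a b := by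
  apply mul_left_cancel₀ (card_ne_zero' (G := G))
  rw [pp_eq ρ v hv hideal, pp_eq ρ v hv hideal]
  rw [← trace_cyc, hχ, trace_cyc]

lemma NN_stab_of_pp [DecidableEq G] (ρ : Representation ℂ G V) (π : Equiv.Perm G)
    (hpp : ∀ a b : G, pp ρ (π a) (π b) = pp ρ a b) :
    ∀ x ∈ NN ρ, Pop π x ∈ NN ρ := by
  intro x hx
  rw [mem_NN_iff_Pr] at hx ⊢
  have hco : ∀ a : G, Pr ρ (Pop π x) a = 0 := by
    intro a
    rw [Pr_coord]
    have hre : ∑ b : G, (Pop π x) b * pp ρ a b = ∑ u : G, x u * pp ρ a (π u) := by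
      rw [← Equiv.sum_comp π fun b => (Pop π x) b * pp ρ a b]
      refine Finset.sum_congr rfl fun u _ => ?_
      rw [Pop_apply, π.symm_apply_apply]
    rw [hre]
    have hre2 : ∀ u : G, pp ρ a (π u) = pp ρ (π.symm a) u := by
      intro u
      have := hpp (π.symm a) u
      rwa [π.apply_symm_apply] at this
    rw [Finset.sum_congr rfl fun u _ => by rw [hre2 u]]
    rw [← Pr_coord, hx]
    rfl
  ext a
  exact hco a

lemma exists_A [DecidableEq G] (ρ : Representation ℂ G V) (v : V)
    (hv : Submodule.span ℂ (Set.range fun g : G => ρ g v) = ⊤)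
    (hideal : ∀ a b : MonoidAlgebra ℂ G, ρ.asAlgebraHom a v = 0 →
      ρ.asAlgebraHom (a * b) v = 0)
    (π : Equiv.Perm G)
    (hstab : ∀ x ∈ NN ρ, Pop π x ∈ NN ρ)
    (hstab' : ∀ x ∈ NN ρ, (Pop π).symm x ∈ NN ρ)
    (w : V) (hw : Submodule.span ℂ (Set.range fun g : G => ρ g w) = ⊤) :
    ∃ A : V ≃ₗ[ℂ] V, ∀ g : G, A (ρ g w) = ρ (π g) w := by
  obtain ⟨J, hTJ, hJT⟩ := exists_J ρ v hv hideal w hw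
  have hker := ker_T_w ρ v hv hideal w hw
  have hTeq : ∀ {x y : E G}, x - y ∈ NN ρ → T ρ w x = T ρ w y := by
    intro x y hxy
    rw [← hker] at hxy
    have : T ρ w (x - y) = 0 := hxy
    rw [map_sub] at this
    exact sub_eq_zero.mp this
  set A₀ : V →ₗ[ℂ] V := T ρ w ∘ₗ (Pop π).toLinearMap ∘ₗ J with hA₀
  set B₀ : V →ₗ[ℂ] V := T ρ w ∘ₗ (Pop π).symm.toLinearMap ∘ₗ J with hB₀
  have key1 : ∀ c : E G, A₀ (T ρ w c) = T ρ w (Pop π c) := by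
    intro c
    show T ρ w (Pop π (J (T ρ w c))) = T ρ w (Pop π c)
    rw [hJT c]
    apply hTeq
    have : Pop π (Pr ρ c) - Pop π c = Pop π (Pr ρ c - c) := by rw [map_sub]
    rw [this]
    apply hstab
    have := sub_Pr_mem ρ c
    have h2 : Pr ρ c - c = -(c - Pr ρ c) := by abel
    rw [h2]
    exact neg_mem this
  have key2 : ∀ c : E G, B₀ (T ρ w c) = T ρ w ((Pop π).symm c) := by
    intro c
    show T ρ w ((Pop π).symm (J (T ρ w c))) = T ρ w ((Pop π).symm c)
    rw [hJT c]
    apply hTeq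
    have : (Pop π).symm (Pr ρ c) - (Pop π).symm c = (Pop π).symm (Pr ρ c - c) := by
      rw [map_sub]
    rw [this]
    apply hstab'
    have := sub_Pr_mem ρ c
    have h2 : Pr ρ c - c = -(c - Pr ρ c) := by abel
    rw [h2]
    exact neg_mem this
  have hAB : A₀ ∘ₗ B₀ = LinearMap.id := by
    apply LinearMap.ext
    intro y
    have hy : T ρ w (J y) = y := hTJ y
    rw [LinearMap.comp_apply, LinearMap.id_apply]
    calc A₀ (B₀ y) = A₀ (B₀ (T ρ w (J y))) := by rw [hy]
      _ = A₀ (T ρ w ((Pop π).symm (J y))) := by rw [key2]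
      _ = T ρ w (Pop π ((Pop π).symm (J y))) := key1 _
      _ = T ρ w (J y) := by rw [LinearEquiv.apply_symm_apply]
      _ = y := hy
  have hBA : B₀ ∘ₗ A₀ = LinearMap.id := by
    apply LinearMap.ext
    intro y
    have hy : T ρ w (J y) = y := hTJ y
    rw [LinearMap.comp_apply, LinearMap.id_apply]
    calc B₀ (A₀ y) = B₀ (A₀ (T ρ w (J y))) := by rw [hy]
      _ = B₀ (T ρ w (Pop π (J y))) := by rw [key1]
      _ = T ρ w ((Pop π).symm (Pop π (J y))) := key2 _
      _ = T ρ w (J y) := by rw [LinearEquiv.symm_apply_apply]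
      _ = y := hy
  refine ⟨LinearEquiv.ofLinear A₀ B₀ hAB hBA, fun g => ?_⟩
  show A₀ (ρ g w) = ρ (π g) w
  rw [← T_single ρ w g, key1, Pop_single, T_single]

lemma trace_A [DecidableEq G] (ρ : Representation ℂ G V) (v : V)
    (hv : Submodule.span ℂ (Set.range fun g : G => ρ g v) = ⊤)
    (hideal : ∀ a b : MonoidAlgebra ℂ G, ρ.asAlgebraHom a v = 0 →
      ρ.asAlgebraHom (a * b) v = 0)
    (π : Equiv.Perm G)
    (w : V) (hw : Submodule.span ℂ (Set.range fun g : G => ρ g w) = ⊤)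
    (A : V ≃ₗ[ℂ] V) (hA : ∀ g : G, A (ρ g w) = ρ (π g) w) :
    LinearMap.trace ℂ V A.toLinearMap =
      (Fintype.card G : ℂ)⁻¹ * ∑ g : G, LinearMap.trace ℂ V (ρ (g⁻¹ * π g)) := by
  have hrel := AT_rel ρ w π A hA
  rw [trace_conj ρ v hv hideal w hw A.toLinearMap _ hrel, trace_E_eq]
  have hterm : ∀ b : G, ((Pop π).toLinearMap ∘ₗ Pr ρ) (EuclideanSpace.single b 1) b
      = pp ρ (π.symm b) b := by
    intro b
    rw [LinearMap.comp_apply, LinearEquiv.coe_toLinearMap, Pop_apply]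
    rfl
  rw [Finset.sum_congr rfl fun b _ => hterm b]
  rw [← Equiv.sum_comp π fun b => pp ρ (π.symm b) b]
  have hterm2 : ∀ g : G, pp ρ (π.symm (π g)) (π g)
      = (Fintype.card G : ℂ)⁻¹ * LinearMap.trace ℂ V (ρ (g⁻¹ * π g)) := by
    intro g
    rw [π.symm_apply_apply]
    have h1 := pp_eq ρ v hv hideal g (π g)
    have h2 : LinearMap.trace ℂ V (ρ (π g * g⁻¹)) = LinearMap.trace ℂ V (ρ (g⁻¹ * π g)) :=
      trace_cyc ρ (π g) g⁻¹
    rw [h2] at h1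
    rw [← h1, inv_mul_cancel_left₀ (card_ne_zero' (G := G))]
  rw [Finset.sum_congr rfl fun g _ => hterm2 g]
  rw [← Finset.mul_sum]

end GenSymAux

end GenSymAux

open GenSymAux in
/-- Let `χ` be an ideal character of `G` (afforded by a cyclic module
whose generator has a two-sided annihilator, i.e. by a two-sided ideal of `ℂG`).
A permutation `π` is a generic symmetry of `χ` iff
`χ(π(g)⁻¹π(h)) = χ(g⁻¹h)` for all `g, h`; moreover every generic symmetry satisfies
`χ̂(π) = (1/|G|) ∑_g χ(g⁻¹π(g))`. -/
theorem generic_sym_of_ideal_character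
    {G : Type*} [Group G] [Fintype G]
    (V : Type*) [AddCommGroup V] [Module ℂ V] [FiniteDimensional ℂ V]
    (ρ : Representation ℂ G V) (v : V)
    (hv : Submodule.span ℂ (Set.range fun g : G => ρ g v) = ⊤)
    (hideal : ∀ a b : MonoidAlgebra ℂ G, ρ.asAlgebraHom a v = 0 →
      ρ.asAlgebraHom (a * b) v = 0)
    (π : Equiv.Perm G) :
    ((∀ w : V, Submodule.span ℂ (Set.range fun g : G => ρ g w) = ⊤ →
        ∃ A : V ≃ₗ[ℂ] V, ∀ g : G, A (ρ g w) = ρ (π g) w) ↔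
      (∀ g h : G, LinearMap.trace ℂ V (ρ ((π g)⁻¹ * π h)) =
        LinearMap.trace ℂ V (ρ (g⁻¹ * h)))) ∧
    ((∀ w : V, Submodule.span ℂ (Set.range fun g : G => ρ g w) = ⊤ →
        ∃ A : V ≃ₗ[ℂ] V, ∀ g : G, A (ρ g w) = ρ (π g) w) →
      ∀ w : V, Submodule.span ℂ (Set.range fun g : G => ρ g w) = ⊤ →
        ∀ A : V ≃ₗ[ℂ] V, (∀ g : G, A (ρ g w) = ρ (π g) w) →
          LinearMap.trace ℂ V A.toLinearMap =
            (Fintype.card G : ℂ)⁻¹ * ∑ g : G, LinearMap.trace ℂ V (ρ (g⁻¹ * π g))) := by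
  classical
  constructor
  · constructor
    · intro H g h
      obtain ⟨A, hA⟩ := H v hv
      obtain ⟨h1, h2⟩ := NN_stab_of_A ρ v hv hideal π A hA
      exact chi_of_pp ρ v hv hideal π (pp_pi_of_stab ρ π h1 h2) g h
    · intro hχ w hw
      have hpp := pp_of_chi ρ v hv hideal π hχ
      have h1 := NN_stab_of_pp ρ π hpp
      have hpp' : ∀ a b : G, pp ρ (π⁻¹ a) (π⁻¹ b) = pp ρ a b := by
        intro a b
        have := hpp (π⁻¹ a) (π⁻¹ b)
        simp only [Equiv.Perm.inv_def, Equiv.apply_symm_apply] at this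
        exact this.symm
      have h2' := NN_stab_of_pp ρ π⁻¹ hpp'
      have h2 : ∀ x ∈ NN ρ, (Pop π).symm x ∈ NN ρ := by
        intro x hx
        rw [Pop_inv_symm]
        exact h2' x hx
      exact exists_A ρ v hv hideal π h1 h2 w hw
  · intro _ w hw A hA
    exact trace_A ρ v hv hideal π w hw A hA
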